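/- Let 𝐗 be a two-sided shift space with shift τ and n : X → ℕ₀ a function on the associated one-sided shift such that for every x ∈ 𝐗 and i₀ ∈ ℤ there exist i < i₀ and j > i₀ with n(x_{[i,∞)}) ≠ 0 and n(x_{[j,∞)}) ≠ 0. For x ∈ 𝐗 define i_x(t) = max{i ∈ ℤ : i ≤ t, n(x_{[i,∞)}) ≠ 0} and j_x(t) = min{j ∈ ℤ : j > t, n(x_{[j,∞)}) ≠ 0} for t ∈ ℝ, and r_x(t) = m_x(i_x(t)) + ((t − i_x(t))/(j_x(t) − i_x(t))) · n(x_{[i_x(t),∞)}), where m_x is the cocycle built from n. Then r_x : ℝ → ℝ is a strictly increasing piecewise-linear homeomorphism with r_x(i) = m_x(i) whenever n(x_{[i,∞)}) ≠ 0. -/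

import Mathlib

/-- The one-sided shift map on `ℕ → A`. -/
def shift {A : Type*} (x : ℕ → A) : ℕ → A := fun n => x (n + 1)

/-- The one-sided tail `x_{[i,∞)}` of a two-sided sequence. -/
def tail {A : Type*} (x : ℤ → A) (i : ℤ) : ℕ → A := fun m => x (i + m)

/-- The `i`-th power (for `i : ℤ`) of the two-sided shift `τ`. -/
def tshiftZ {A : Type*} (i : ℤ) (x : ℤ → A) : ℤ → A := fun m => x (m + i)

/-- The two-sided shift space associated to a one-sided shift space `X`. -/
def TwoSided {A : Type*} (X : Set (ℕ → A)) : Set (ℤ → A) :=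
  {x | ∀ m : ℤ, tail x m ∈ X}

/-- The partial-sum cocycle `m_x(j)` built from `n : X → ℕ₀` along `x`. -/
def mcoc {A : Type*} (n : (ℕ → A) → ℕ) (x : ℤ → A) (j : ℤ) : ℤ :=
  if 0 ≤ j then ∑ i ∈ Finset.range j.toNat, (n (tail x (i : ℤ)) : ℤ)
  else -∑ i ∈ Finset.range (-j).toNat, (n (tail x (-(i : ℤ) - 1)) : ℤ)

/-- `i_x(t)`: the largest `i ≤ t` with `n(x_{[i,∞)}) ≠ 0`. -/
noncomputable def ixt {A : Type*} (n : (ℕ → A) → ℕ) (x : ℤ → A) (t : ℝ) : ℤ :=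
  sSup {i : ℤ | (i : ℝ) ≤ t ∧ n (tail x i) ≠ 0}

/-- `j_x(t)`: the smallest `j > t` with `n(x_{[j,∞)}) ≠ 0`. -/
noncomputable def jxt {A : Type*} (n : (ℕ → A) → ℕ) (x : ℤ → A) (t : ℝ) : ℤ :=
  sInf {j : ℤ | t < (j : ℝ) ∧ n (tail x j) ≠ 0}

/-- The piecewise-linear interpolation `r_x : ℝ → ℝ` of the cocycle `m_x`. -/
noncomputable def rfun {A : Type*} (n : (ℕ → A) → ℕ) (x : ℤ → A) (t : ℝ) : ℝ :=
  (mcoc n x (ixt n x t) : ℝ) +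
    ((t - (ixt n x t : ℝ)) / ((jxt n x t : ℝ) - (ixt n x t : ℝ))) *
      (n (tail x (ixt n x t)) : ℝ)

lemma mcoc_succ {A : Type*} (n : (ℕ → A) → ℕ) (x : ℤ → A) (j : ℤ) :
    mcoc n x (j + 1) = mcoc n x j + n (tail x j) := by
  unfold mcoc
  rcases le_or_gt 0 j with hj | hj
  · rw [if_pos hj, if_pos (by omega : (0:ℤ) ≤ j + 1)]
    have h1 : (j + 1).toNat = j.toNat + 1 := by omega
    rw [h1, Finset.sum_range_succ, Int.toNat_of_nonneg hj]
  · rw [if_neg (by omega : ¬ (0:ℤ) ≤ j)]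
    rcases eq_or_lt_of_le (by omega : j + 1 ≤ 0) with h0 | h0
    · rw [if_pos (by omega : (0:ℤ) ≤ j + 1)]
      have hj1 : j = -1 := by omega
      subst hj1
      norm_num [Finset.sum_range_one]
    · rw [if_neg (by omega : ¬ (0:ℤ) ≤ j + 1)]
      have h1 : (-j).toNat = (-(j+1)).toNat + 1 := by omega
      rw [h1, Finset.sum_range_succ]
      have h2 : (-(((-(j+1)).toNat : ℕ) : ℤ)) - 1 = j := by omega
      rw [h2]
      ring

lemma mcoc_of_zero {A : Type*} (n : (ℕ → A) → ℕ) (x : ℤ → A) (a : ℤ) :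
    ∀ b : ℤ, a ≤ b → ((∀ k : ℤ, a ≤ k → k < b → n (tail x k) = 0) → mcoc n x b = mcoc n x a) := by
  refine Int.le_induction (motive := fun b _ => (∀ k : ℤ, a ≤ k → k < b → n (tail x k) = 0) → mcoc n x b = mcoc n x a) (fun _ => rfl) ?_
  intro b hb ih h
  rw [mcoc_succ, h b hb (by omega), ih (fun k hk hkb => h k hk (by omega))]
  simp

lemma mcoc_mono {A : Type*} (n : (ℕ → A) → ℕ) (x : ℤ → A) :
    Monotone (mcoc n x) := by
  intro a b hab
  refine Int.le_induction (motive := fun b _ => mcoc n x a ≤ mcoc n x b) le_rfl ?_ b hab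
  intro c hc ih
  rw [mcoc_succ]
  omega

/-- Under the cofinal-nonvanishing hypothesis on `n` along every `x ∈ 𝐗`, the
map `r_x` is a strictly increasing continuous bijection of `ℝ` (hence a
homeomorphism) with `r_x(i) = m_x(i)` whenever `n(x_{[i,∞)}) ≠ 0`. -/
theorem stmt10 {A : Type*} [Fintype A] [TopologicalSpace A] [DiscreteTopology A]
    (X : Set (ℕ → A)) (hcl : IsClosed X) (hinv : shift '' X = X)
    (n : (ℕ → A) → ℕ)
    (hcof : ∀ x ∈ TwoSided X, ∀ i₀ : ℤ,
      (∃ i : ℤ, i < i₀ ∧ n (tail x i) ≠ 0) ∧ (∃ j : ℤ, i₀ < j ∧ n (tail x j) ≠ 0)) :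
    ∀ x ∈ TwoSided X,
      StrictMono (rfun n x) ∧ Continuous (rfun n x) ∧
      Function.Bijective (rfun n x) ∧
      ∀ i : ℤ, n (tail x i) ≠ 0 → rfun n x (i : ℝ) = (mcoc n x i : ℝ) := by
  
  intro x hx
  have hC := hcof x hx
  -- spec of ixt
  have hst : ∀ t : ℝ, {i : ℤ | (i : ℝ) ≤ t ∧ n (tail x i) ≠ 0}.Nonempty ∧
      BddAbove {i : ℤ | (i : ℝ) ≤ t ∧ n (tail x i) ≠ 0} := by
    intro t
    constructor
    · obtain ⟨i, hi, hni⟩ := (hC (⌊t⌋ + 1)).1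
      have h1 : (i : ℝ) ≤ (⌊t⌋ : ℝ) := by exact_mod_cast (by omega : i ≤ ⌊t⌋)
      exact ⟨i, le_trans h1 (Int.floor_le t), hni⟩
    · exact ⟨⌊t⌋, fun k hk => Int.le_floor.mpr hk.1⟩
  have hImem : ∀ t : ℝ, (ixt n x t : ℝ) ≤ t ∧ n (tail x (ixt n x t)) ≠ 0 := fun t =>
    Int.csSup_mem (hst t).1 (hst t).2
  have hIle : ∀ t : ℝ, (ixt n x t : ℝ) ≤ t := fun t => (hImem t).1
  have hIne : ∀ t, n (tail x (ixt n x t)) ≠ 0 := fun t => (hImem t).2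
  have hImax : ∀ (t : ℝ) (k : ℤ), (k : ℝ) ≤ t → n (tail x k) ≠ 0 → k ≤ ixt n x t :=
    fun t k hk hnk => le_csSup (hst t).2 ⟨hk, hnk⟩
  -- spec of jxt
  have hjt : ∀ t : ℝ, {j : ℤ | t < (j : ℝ) ∧ n (tail x j) ≠ 0}.Nonempty ∧
      BddBelow {j : ℤ | t < (j : ℝ) ∧ n (tail x j) ≠ 0} := by
    intro t
    constructor
    · obtain ⟨j, hj, hnj⟩ := (hC ⌈t⌉).2
      have h1 : (⌈t⌉ : ℝ) < (j : ℝ) := by exact_mod_cast hj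
      exact ⟨j, lt_of_le_of_lt (Int.le_ceil t) h1, hnj⟩
    · exact ⟨⌈t⌉, fun k hk => Int.ceil_le.mpr hk.1.le⟩
  have hJmem : ∀ t : ℝ, t < (jxt n x t : ℝ) ∧ n (tail x (jxt n x t)) ≠ 0 := fun t =>
    Int.csInf_mem (hjt t).1 (hjt t).2
  have hJgt : ∀ t : ℝ, t < (jxt n x t : ℝ) := fun t => (hJmem t).1
  have hJne : ∀ t, n (tail x (jxt n x t)) ≠ 0 := fun t => (hJmem t).2
  have hJmin : ∀ (t : ℝ) (k : ℤ), t < (k : ℝ) → n (tail x k) ≠ 0 → jxt n x t ≤ k :=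
    fun t k hk hnk => csInf_le (hjt t).2 ⟨hk, hnk⟩
  have hIJ : ∀ t : ℝ, ixt n x t < jxt n x t := fun t => by
    exact_mod_cast lt_of_le_of_lt (hIle t) (hJgt t)
  have hdpos : ∀ t : ℝ, (0:ℝ) < (jxt n x t : ℝ) - (ixt n x t : ℝ) := by
    intro t
    have h : ((ixt n x t : ℤ) : ℝ) < ((jxt n x t : ℤ) : ℝ) := by exact_mod_cast hIJ t
    linarith
  have hnpos : ∀ t : ℝ, (0:ℝ) < (n (tail x (ixt n x t)) : ℝ) := fun t => by
    exact_mod_cast Nat.pos_of_ne_zero (hIne t)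
  -- cocycle identity across the gap
  have hMJ : ∀ t : ℝ, mcoc n x (jxt n x t) = mcoc n x (ixt n x t) + n (tail x (ixt n x t)) := by
    intro t
    have h1 : mcoc n x (jxt n x t) = mcoc n x (ixt n x t + 1) := by
      refine mcoc_of_zero n x (ixt n x t + 1) (jxt n x t) (by have := hIJ t; omega) ?_
      intro k hk1 hk2
      by_contra hnk
      rcases le_or_gt (k : ℝ) t with h | h
      · exact absurd (hImax t k h hnk) (by omega)
      · exact absurd (hJmin t k h hnk) (by omega)
    rw [h1, mcoc_succ]
  have hIfix : ∀ i : ℤ, n (tail x i) ≠ 0 → ixt n x (i : ℝ) = i := by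
    intro i hni
    refine le_antisymm ?_ (hImax _ i le_rfl hni)
    exact_mod_cast hIle (i : ℝ)
  have hJfix : ∀ i : ℤ, n (tail x i) ≠ 0 → jxt n x ((i : ℝ) - 1) = i := by
    intro i hni
    refine le_antisymm (hJmin _ i (by linarith) hni) (le_csInf (hjt _).1 ?_)
    intro k hk
    have h1 : ((i : ℤ) : ℝ) - 1 < (k : ℝ) := hk.1
    have h2 : ((i - 1 : ℤ) : ℝ) < (k : ℝ) := by push_cast; linarith
    have := Int.cast_lt.mp h2
    omega
  -- determination of ixt/jxt on the interval [i, jxt i)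
  have hdet : ∀ (t : ℝ) (i : ℤ), n (tail x i) ≠ 0 → (i : ℝ) ≤ t →
      t < ((jxt n x (i : ℝ) : ℤ) : ℝ) → ixt n x t = i ∧ jxt n x t = jxt n x (i : ℝ) := by
    intro t i hni hit htj
    have h1 : i ≤ ixt n x t := hImax t i hit hni
    have h2 : ixt n x t ≤ i := by
      by_contra h
      push_neg at h
      have hc1 : (i : ℝ) < (ixt n x t : ℝ) := by exact_mod_cast h
      have hc2 := hJmin (i : ℝ) (ixt n x t) hc1 (hIne t)
      have hc3 : ((jxt n x (i:ℝ) : ℤ) : ℝ) ≤ ((ixt n x t : ℤ) : ℝ) := by exact_mod_cast hc2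
      have hc4 := hIle t
      linarith
    refine ⟨le_antisymm h2 h1, le_antisymm (hJmin t _ htj (hJne (i:ℝ))) ?_⟩
    refine hJmin (i : ℝ) (jxt n x t) ?_ (hJne t)
    exact lt_of_le_of_lt hit (hJgt t)
  -- monotonicity of ixt
  have hmonoI : ∀ s t : ℝ, s ≤ t → ixt n x s ≤ ixt n x t :=
    fun s t hst => hImax t _ (le_trans (hIle s) hst) (hIne s)
  -- strict monotonicity
  have hsm : StrictMono (rfun n x) := by
    intro s t hst
    rcases eq_or_lt_of_le (hmonoI s t hst.le) with heq | hlt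
    · -- same interval
      have hjeq : jxt n x s = jxt n x t := by
        refine le_antisymm (hJmin s _ (lt_of_le_of_lt hst.le (hJgt t)) (hJne t)) ?_
        refine hJmin t _ ?_ (hJne s)
        by_contra h
        push_neg at h
        have h1 := hImax t _ h (hJne s)
        rw [← heq] at h1
        have h2 : ((jxt n x s : ℤ) : ℝ) ≤ ((ixt n x s : ℤ) : ℝ) := by exact_mod_cast h1
        have := hJgt s
        have := hIle s
        linarith
      unfold rfun
      rw [← heq, ← hjeq]
      have h5 : (s - (ixt n x s : ℝ)) / ((jxt n x s : ℝ) - (ixt n x s : ℝ)) <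
          (t - (ixt n x s : ℝ)) / ((jxt n x s : ℝ) - (ixt n x s : ℝ)) :=
        (div_lt_div_iff_of_pos_right (hdpos s)).mpr (by linarith)
      have h6 := mul_lt_mul_of_pos_right h5 (hnpos s)
      linarith
    · -- different intervals
      have h1 : rfun n x s < (mcoc n x (jxt n x s) : ℝ) := by
        have hq : (s - (ixt n x s : ℝ)) / ((jxt n x s : ℝ) - (ixt n x s : ℝ)) < 1 :=
          (div_lt_one (hdpos s)).mpr (by linarith [hJgt s])
        have h6 := mul_lt_mul_of_pos_right hq (hnpos s)
        have h7 : ((mcoc n x (jxt n x s) : ℤ) : ℝ) =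
            (mcoc n x (ixt n x s) : ℝ) + (n (tail x (ixt n x s)) : ℝ) := by
          rw [hMJ s]; push_cast; ring
        unfold rfun
        rw [h7]
        linarith
      have hs_lt : s < (ixt n x t : ℝ) := by
        by_contra h
        push_neg at h
        exact absurd (hImax s _ h (hIne t)) (by omega)
      have h2 : jxt n x s ≤ ixt n x t := hJmin s _ hs_lt (hIne t)
      have h3 : (mcoc n x (jxt n x s) : ℝ) ≤ (mcoc n x (ixt n x t) : ℝ) := by
        exact_mod_cast mcoc_mono n x h2
      have h4 : (mcoc n x (ixt n x t) : ℝ) ≤ rfun n x t := by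
        have hnn : 0 ≤ (t - (ixt n x t : ℝ)) / ((jxt n x t : ℝ) - (ixt n x t : ℝ)) *
            (n (tail x (ixt n x t)) : ℝ) :=
          mul_nonneg (div_nonneg (by linarith [hIle t]) (hdpos t).le) (Nat.cast_nonneg _)
        unfold rfun
        linarith
      linarith
  -- unboundedness of mcoc along nonvanishing points
  have hdown : ∀ N : ℕ, ∃ i : ℤ, n (tail x i) ≠ 0 ∧ mcoc n x i ≤ mcoc n x (ixt n x 0) - N := by
    intro N
    induction N with
    | zero => exact ⟨ixt n x 0, hIne 0, by simp⟩
    | succ N ih =>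
      obtain ⟨i, hni, hmi⟩ := ih
      refine ⟨ixt n x ((i : ℝ) - 1), hIne _, ?_⟩
      have h1 := hMJ ((i : ℝ) - 1)
      rw [hJfix i hni] at h1
      have h3 : 1 ≤ (n (tail x (ixt n x ((i : ℝ) - 1))) : ℤ) := by
        exact_mod_cast Nat.one_le_iff_ne_zero.mpr (hIne ((i : ℝ) - 1))
      omega
  have hup : ∀ N : ℕ, ∃ j : ℤ, n (tail x j) ≠ 0 ∧ mcoc n x (ixt n x 0) + N ≤ mcoc n x j := by
    intro N
    induction N with
    | zero => exact ⟨ixt n x 0, hIne 0, by simp⟩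
    | succ N ih =>
      obtain ⟨j, hnj, hmj⟩ := ih
      refine ⟨jxt n x (j : ℝ), hJne _, ?_⟩
      have h1 := hMJ (j : ℝ)
      rw [hIfix j hnj] at h1
      have h3 : 1 ≤ (n (tail x j) : ℤ) := by
        exact_mod_cast Nat.one_le_iff_ne_zero.mpr hnj
      omega
  -- surjectivity
  have hsurj : Function.Surjective (rfun n x) := by
    intro y
    obtain ⟨N₁, hN₁⟩ := exists_nat_ge ((mcoc n x (ixt n x 0) : ℝ) - y)
    obtain ⟨ilo, hilo, hmlo⟩ := hdown N₁
    have hmlo' : (mcoc n x ilo : ℝ) ≤ y := by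
      have h : (mcoc n x ilo : ℝ) ≤ (mcoc n x (ixt n x 0) : ℝ) - (N₁ : ℝ) := by
        exact_mod_cast hmlo
      linarith
    obtain ⟨N₂, hN₂⟩ := exists_nat_ge (y - (mcoc n x (ixt n x 0) : ℝ) + 1)
    obtain ⟨jhi, hjhi, hmhi⟩ := hup N₂
    have hmhi' : y < (mcoc n x jhi : ℝ) := by
      have h : (mcoc n x (ixt n x 0) : ℝ) + (N₂ : ℝ) ≤ (mcoc n x jhi : ℝ) := by
        exact_mod_cast hmhi
      linarith
    have hBne : ({k : ℤ | n (tail x k) ≠ 0 ∧ (mcoc n x k : ℝ) ≤ y}).Nonempty :=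
      ⟨ilo, hilo, hmlo'⟩
    have hBbdd : BddAbove {k : ℤ | n (tail x k) ≠ 0 ∧ (mcoc n x k : ℝ) ≤ y} := by
      refine ⟨jhi, fun k hk => ?_⟩
      by_contra h
      push_neg at h
      have h1 : (mcoc n x jhi : ℝ) ≤ (mcoc n x k : ℝ) := by
        exact_mod_cast mcoc_mono n x h.le
      linarith [hk.2]
    obtain ⟨hniB, hmiy⟩ := Int.csSup_mem hBne hBbdd
    set i := sSup {k : ℤ | n (tail x k) ≠ 0 ∧ (mcoc n x k : ℝ) ≤ y} with hidef
    have hmj : mcoc n x (jxt n x (i : ℝ)) = mcoc n x i + n (tail x i) := by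
      have h2 := hMJ (i : ℝ)
      rwa [hIfix i hniB] at h2
    have hjny : y < (mcoc n x (jxt n x (i : ℝ)) : ℝ) := by
      by_contra h
      push_neg at h
      have hmem : jxt n x (i : ℝ) ∈ {k : ℤ | n (tail x k) ≠ 0 ∧ (mcoc n x k : ℝ) ≤ y} :=
        ⟨hJne (i : ℝ), h⟩
      have h1 := le_csSup hBbdd hmem
      have h2 : (i : ℝ) < ((jxt n x (i:ℝ) : ℤ) : ℝ) := hJgt (i : ℝ)
      have h3 : i < jxt n x (i : ℝ) := by exact_mod_cast h2
      omega
    have hnp0 : (0:ℝ) < (n (tail x i) : ℝ) := by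
      exact_mod_cast Nat.pos_of_ne_zero hniB
    have hd0 : (0:ℝ) < ((jxt n x (i : ℝ) : ℤ) : ℝ) - (i : ℝ) := by
      have h2 : (i : ℝ) < ((jxt n x (i:ℝ) : ℤ) : ℝ) := hJgt (i : ℝ)
      linarith
    set t : ℝ := (i : ℝ) + (y - (mcoc n x i : ℝ)) * (((jxt n x (i : ℝ) : ℤ) : ℝ) - (i : ℝ)) /
        (n (tail x i) : ℝ) with htdef
    have hit : (i : ℝ) ≤ t := by
      have h : 0 ≤ (y - (mcoc n x i : ℝ)) * (((jxt n x (i : ℝ) : ℤ) : ℝ) - (i : ℝ)) /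
          (n (tail x i) : ℝ) :=
        div_nonneg (mul_nonneg (by linarith) hd0.le) hnp0.le
      rw [htdef]
      linarith
    have htj : t < ((jxt n x (i : ℝ) : ℤ) : ℝ) := by
      have hyn : y - (mcoc n x i : ℝ) < (n (tail x i) : ℝ) := by
        have h : ((mcoc n x (jxt n x (i : ℝ)) : ℤ) : ℝ) =
            (mcoc n x i : ℝ) + (n (tail x i) : ℝ) := by
          rw [hmj]; push_cast; ring
        linarith
      have h : (y - (mcoc n x i : ℝ)) * (((jxt n x (i : ℝ) : ℤ) : ℝ) - (i : ℝ)) /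
          (n (tail x i) : ℝ) < ((jxt n x (i : ℝ) : ℤ) : ℝ) - (i : ℝ) := by
        rw [div_lt_iff₀ hnp0]
        nlinarith
      rw [htdef]
      linarith
    obtain ⟨hie, hje⟩ := hdet t i hniB hit htj
    refine ⟨t, ?_⟩
    unfold rfun
    rw [hie, hje, htdef]
    field_simp
    ring
  have hcont : Continuous (rfun n x) := hsm.monotone.continuous_of_surjective hsurj
  refine ⟨hsm, hcont, ⟨hsm.injective, hsurj⟩, ?_⟩
  intro i hni
  unfold rfun
  rw [hIfix i hni]
  simp
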